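/- Let 1 < α ≤ 2, β = α/(α-1), a > 0. Define L_{a,α}(x) = x²/2 for |x| ≤ a and L_{a,α}(x) = a^{2-α}|x|^α/α + a²(α-2)/(2α) for |x| ≥ a, and define H_{a,α}(x) = x²/2 for |x| ≤ a and H_{a,α}(x) = a^{2-β}|x|^β/β + a²(β-2)/(2β) for |x| ≥ a. Then H_{a,α} is the Fenchel–Legendre transform of L_{a,α}, i.e., H_{a,α}(y) = sup_{x ∈ ℝ} (xy - L_{a,α}(x)) for all y ∈ ℝ. -/

import Mathlib

open Real

/-- The modified cost function: quadratic on `[-a,a]`, power-`p` growth outside. -/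
noncomputable def Lmod (a p : ℝ) (x : ℝ) : ℝ :=
  if |x| ≤ a then x ^ 2 / 2
  else a ^ (2 - p) * |x| ^ p / p + a ^ 2 * (p - 2) / (2 * p)

lemma Lmod_abs (a p x : ℝ) : Lmod a p x = Lmod a p |x| := by
  unfold Lmod
  rw [abs_abs, sq_abs]

lemma Lmod_one (p x : ℝ) :
    Lmod 1 p x = if |x| ≤ 1 then x ^ 2 / 2 else |x| ^ p / p + (p - 2) / (2 * p) := by
  unfold Lmod
  simp [Real.one_rpow]

lemma Lmod_scale (a p t : ℝ) (ha : 0 < a) : Lmod a p (a * t) = a ^ 2 * Lmod 1 p t := by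
  rw [Lmod_one]
  unfold Lmod
  have habs : |a * t| = a * |t| := by rw [abs_mul, abs_of_pos ha]
  have hc : (|a * t| ≤ a) ↔ (|t| ≤ 1) := by
    rw [habs]
    constructor
    · intro h; nlinarith [abs_nonneg t]
    · intro h; nlinarith [abs_nonneg t]
  split_ifs with h1 h2 h2
  · ring
  · exact absurd (hc.mp h1) h2
  · exact absurd (hc.mpr h2) h1
  · rw [habs, Real.mul_rpow ha.le (abs_nonneg t), ← Real.rpow_natCast a 2]
    have key : a ^ (2 - p) * a ^ p = a ^ (((2:ℕ)):ℝ) := by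
      rw [← Real.rpow_add ha]; norm_num
    rw [show a ^ (2 - p) * (a ^ p * |t| ^ p) = a ^ (((2:ℕ)):ℝ) * |t| ^ p by
      rw [← mul_assoc, key]]
    ring

lemma beta_facts (α β : ℝ) (hα : 1 < α) (hα2 : α ≤ 2) (hβ : 1 / α + 1 / β = 1) :
    2 ≤ β ∧ α + β = α * β ∧ (α - 2) / (2 * α) + (β - 2) / (2 * β) = 0 := by
  have hα0 : (0:ℝ) < α := by linarith
  have h1a : 1 / 2 ≤ 1 / α := by
    rw [div_le_div_iff₀ (by norm_num) hα0]; linarith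
  have h1b : 0 < 1 / β := by
    have : 1 / α < 1 := by rw [div_lt_one hα0]; exact hα
    linarith
  have hβpos : 0 < β := by
    by_contra h
    push_neg at h
    have : 1 / β ≤ 0 := div_nonpos_of_nonneg_of_nonpos (by norm_num) h
    linarith
  have hβ2 : 2 ≤ β := by
    have h1b' : 1 / β ≤ 1 / 2 := by linarith
    rw [div_le_div_iff₀ hβpos (by norm_num)] at h1b'
    linarith
  have hαβ : α + β = α * β := by
    have h := hβ
    field_simp at h
    linarith
  have hca : (α - 2) / (2 * α) = 1 / 2 - 1 / α := by
    rw [eq_sub_iff_add_eq, div_add_div _ _ (by positivity) (ne_of_gt hα0),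
      div_eq_div_iff (by positivity) (by norm_num)]
    ring
  have hcb : (β - 2) / (2 * β) = 1 / 2 - 1 / β := by
    rw [eq_sub_iff_add_eq, div_add_div _ _ (by positivity) (ne_of_gt hβpos),
      div_eq_div_iff (by positivity) (by norm_num)]
    ring
  refine ⟨hβ2, hαβ, ?_⟩
  rw [hca, hcb]
  linarith

lemma ub1_nonneg (α β : ℝ) (hα : 1 < α) (hα2 : α ≤ 2) (hβ : 1 / α + 1 / β = 1)
    {s t : ℝ} (hs : 0 ≤ s) (ht : 0 ≤ t) :
    s * t - Lmod 1 α s ≤ Lmod 1 β t := by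
  obtain ⟨hβ2, hαβ, hconst⟩ := beta_facts α β hα hα2 hβ
  have hα0 : (0:ℝ) < α := by linarith
  have hβ0 : (0:ℝ) < β := by linarith
  have hconj : α.HolderConjugate β := Real.holderConjugate_iff.mpr ⟨hα, by rw [← one_div, ← one_div]; exact hβ⟩
  rw [Lmod_one, Lmod_one, abs_of_nonneg hs, abs_of_nonneg ht]
  split_ifs with h1 h2 h2
  · nlinarith [sq_nonneg (s - t)]
  · -- s ≤ 1, t > 1
    have hgm := Real.geom_mean_le_arith_mean2_weighted
      (by positivity : (0:ℝ) ≤ 2 / β) (by apply div_nonneg <;> linarith)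
      (by positivity : (0:ℝ) ≤ t ^ β) (by norm_num : (0:ℝ) ≤ 1)
      (by field_simp; ring : 2 / β + (β - 2) / β = 1)
    rw [Real.one_rpow, mul_one] at hgm
    have hE : (t ^ β) ^ (2 / β) = t ^ 2 := by
      rw [← Real.rpow_natCast t 2, ← Real.rpow_mul ht]
      congr 1
      push_cast
      field_simp
    rw [hE] at hgm
    have hr : 2 / β * t ^ β + (β - 2) / β * 1 = 2 * (t ^ β / β + (β - 2) / (2 * β)) := by
      ring
    nlinarith [sq_nonneg (s - t)]
  · -- s > 1, t ≤ 1
    push_neg at h1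
    have hber : 1 + α * (s - 1) ≤ s ^ α := by
      have h := one_add_mul_self_le_rpow_one_add (by linarith : (-1:ℝ) ≤ s - 1) hα.le
      rwa [show (1:ℝ) + (s - 1) = s by ring] at h
    have hdiv : (1 + α * (s - 1)) / α ≤ s ^ α / α := by gcongr
    have hexp : (1 + α * (s - 1)) / α = 1 / α + s - 1 := by
      field_simp
      ring
    have hca : (α - 2) / (2 * α) = 1 / 2 - 1 / α := by
      rw [eq_sub_iff_add_eq, div_add_div _ _ (by positivity) (ne_of_gt hα0),
        div_eq_div_iff (by positivity) (by norm_num)]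
      ring
    rw [hexp] at hdiv
    rw [hca]
    nlinarith [mul_nonneg (by linarith : (0:ℝ) ≤ s - 1) (by linarith : (0:ℝ) ≤ 1 - t),
      sq_nonneg (1 - t)]
  · -- s > 1, t > 1
    have hy := Real.young_inequality_of_nonneg hs ht hconj
    have hca : (α - 2) / (2 * α) + (β - 2) / (2 * β) = 0 := hconst
    linarith

lemma ub1 (α β : ℝ) (hα : 1 < α) (hα2 : α ≤ 2) (hβ : 1 / α + 1 / β = 1) (s t : ℝ) :
    s * t - Lmod 1 α s ≤ Lmod 1 β t := by
  have h := ub1_nonneg α β hα hα2 hβ (abs_nonneg s) (abs_nonneg t)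
  rw [← Lmod_abs, ← Lmod_abs] at h
  calc s * t - Lmod 1 α s ≤ |s| * |t| - Lmod 1 α s := by
        have := le_abs_self (s * t)
        rw [abs_mul] at this
        linarith
    _ ≤ Lmod 1 β t := h

lemma ex1 (α β : ℝ) (hα : 1 < α) (hα2 : α ≤ 2) (hβ : 1 / α + 1 / β = 1) (t : ℝ) :
    ∃ s : ℝ, s * t - Lmod 1 α s = Lmod 1 β t := by
  obtain ⟨hβ2, hαβ, hconst⟩ := beta_facts α β hα hα2 hβ
  have hα0 : (0:ℝ) < α := by linarith
  have hβ0 : (0:ℝ) < β := by linarith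
  by_cases h : |t| ≤ 1
  · refine ⟨t, ?_⟩
    rw [Lmod_one, Lmod_one, if_pos h, if_pos h]
    ring
  · push_neg at h
    have ht0 : 0 < |t| := by linarith
    refine ⟨t * |t| ^ (β - 2), ?_⟩
    have hst : (t * |t| ^ (β - 2)) * t = |t| ^ β := by
      rw [show (t * |t| ^ (β - 2)) * t = (|t| ^ 2) * |t| ^ (β - 2) by
        rw [sq_abs]; ring, ← Real.rpow_natCast |t| 2, ← Real.rpow_add ht0]
      norm_num
    have habs : |t * |t| ^ (β - 2)| = |t| ^ (β - 1) := by
      rw [abs_mul, abs_of_nonneg (Real.rpow_nonneg (abs_nonneg t) _)]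
      nth_rewrite 1 [← Real.rpow_one |t|]
      rw [← Real.rpow_add ht0]
      congr 1
      ring
    have hgt : 1 < |t| ^ (β - 1) :=
      Real.one_lt_rpow_iff_of_pos ht0 |>.mpr (Or.inl ⟨h, by linarith⟩)
    have hpow : (|t| ^ (β - 1)) ^ α = |t| ^ β := by
      rw [← Real.rpow_mul (abs_nonneg t)]
      congr 1
      linear_combination -hαβ
    rw [Lmod_one, Lmod_one, habs, if_neg (not_le.mpr hgt), if_neg (not_le.mpr h),
      hst, hpow]
    set X := |t| ^ β with hX
    have h1 : X / α + X / β = X := by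
      rw [div_eq_mul_one_div X α, div_eq_mul_one_div X β, ← mul_add, hβ, mul_one]
    linarith [hconst, h1]

theorem stmt_4 (α β a : ℝ) (hα : 1 < α) (hα2 : α ≤ 2) (ha : 0 < a)
    (hβ : 1 / α + 1 / β = 1) :
    ∀ y : ℝ, Lmod a β y = ⨆ x : ℝ, (x * y - Lmod a α x) := by
  intro y
  have ha2 : (0:ℝ) < a ^ 2 := by positivity
  have hsc : ∀ p x : ℝ, Lmod a p x = a ^ 2 * Lmod 1 p (x / a) := by
    intro p x
    rw [← Lmod_scale a p (x / a) ha, mul_div_cancel₀ x (ne_of_gt ha)]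
  have ub : ∀ x : ℝ, x * y - Lmod a α x ≤ Lmod a β y := by
    intro x
    have key := ub1 α β hα hα2 hβ (x / a) (y / a)
    rw [hsc α x, hsc β y]
    have hxy : x * y = a ^ 2 * ((x / a) * (y / a)) := by
      field_simp
    rw [hxy]
    nlinarith [key]
  have ex : ∃ x : ℝ, x * y - Lmod a α x = Lmod a β y := by
    obtain ⟨s, hs⟩ := ex1 α β hα hα2 hβ (y / a)
    refine ⟨a * s, ?_⟩
    rw [hsc α (a * s), hsc β y, mul_div_cancel_left₀ s (ne_of_gt ha)]
    have hxy : (a * s) * y = a ^ 2 * (s * (y / a)) := by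
      field_simp
    rw [hxy]
    nlinarith [hs]
  obtain ⟨x₀, hx₀⟩ := ex
  have hbdd : BddAbove (Set.range fun x : ℝ => x * y - Lmod a α x) :=
    ⟨Lmod a β y, fun z hz => by obtain ⟨x, rfl⟩ := hz; exact ub x⟩
  refine le_antisymm ?_ (ciSup_le ub)
  rw [← hx₀]
  exact le_ciSup hbdd x₀
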